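/- Let G be a graph, u,v nonadjacent vertices, and let G' be obtained from G by adding N+1 internally disjoint new paths of length 3 between u and v (new non-edges between added vertices and V(G) forbidden). If F is a set of at most N non-edges of G such that G' + F is C4-free, then uv ∉ F. -/

import Mathlib

/-- The cycle on 4 vertices. -/
def C4 : SimpleGraph (Fin 4) :=
  SimpleGraph.fromEdgeSet {s(0,1), s(1,2), s(2,3), s(3,0)}

/-- The graph `G'` obtained from `G` by adding `M` internally disjoint new paths
of length 3 between `u` and `v`: for each `i < M` two internal vertices
`xᵢ = (i, false)` and `yᵢ = (i, true)` with edges `u xᵢ, xᵢ yᵢ, yᵢ v`, and no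
other edges incident to the new vertices. -/
def addPaths {V : Type*} (G : SimpleGraph V) (u v : V) (M : ℕ) :
    SimpleGraph (V ⊕ (Fin M × Bool)) :=
  SimpleGraph.fromRel (fun x y =>
    match x, y with
    | Sum.inl a, Sum.inl b => G.Adj a b
    | Sum.inl a, Sum.inr (_, false) => a = u
    | Sum.inl a, Sum.inr (_, true) => a = v
    | Sum.inr (i, false), Sum.inr (j, true) => i = j
    | _, _ => False)

lemma no_mixed {V : Type*} (F : Set (Sym2 V)) {M : ℕ} (a : V) (b : Fin M × Bool) :
    s(Sum.inl a, (Sum.inr b : V ⊕ (Fin M × Bool))) ∉ Sym2.map Sum.inl '' F := by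
  rintro ⟨e, -, he⟩
  induction e using Sym2.ind with
  | _ p q =>
    simp only [Sym2.map_pair_eq, Sym2.eq, Sym2.rel_iff', Prod.mk.injEq, Prod.swap_prod_mk] at he
    rcases he with ⟨-, h⟩ | ⟨h, -⟩ <;> exact Sum.inl_ne_inr h

/-- Let `u, v` be nonadjacent vertices of `G` and let `G'` be obtained by adding
`N + 1` internally disjoint paths of length 3 between `u` and `v`. If `F` is a
set of at most `N` non-edges of `G` such that `G' + F` is `C4`-free, then
`uv ∉ F`. -/
theorem uv_not_filled {V : Type*} (G : SimpleGraph V) (u v : V)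
    (hne : u ≠ v) (huv : ¬G.Adj u v) (N : ℕ)
    (F : Set (Sym2 V)) (hF : F ⊆ Gᶜ.edgeSet) (hFfin : F.Finite) (hFcard : F.ncard ≤ N)
    (hfree : IsEmpty (C4 ↪g
      (addPaths G u v (N + 1) ⊔ SimpleGraph.fromEdgeSet (Sym2.map Sum.inl '' F)))) :
    s(u, v) ∉ F := by
  intro hmem
  have hvu : v ≠ u := fun h => hne h.symm
  set H := addPaths G u v (N + 1) ⊔ SimpleGraph.fromEdgeSet (Sym2.map Sum.inl '' F) with hH
  let f : Fin 4 → V ⊕ (Fin (N + 1) × Bool) :=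
    ![Sum.inl u, Sum.inr (0, false), Sum.inr (0, true), Sum.inl v]
  have hinj : Function.Injective f := by
    intro a b hab
    fin_cases a <;> fin_cases b <;>
      first
      | rfl
      | (exfalso; simp [f, hne, hvu] at hab)
  have hC4 : ∀ a b : Fin 4, C4.Adj a b ↔
      (a = 0 ∧ b = 1) ∨ (a = 1 ∧ b = 0) ∨ (a = 1 ∧ b = 2) ∨ (a = 2 ∧ b = 1) ∨
      (a = 2 ∧ b = 3) ∨ (a = 3 ∧ b = 2) ∨ (a = 3 ∧ b = 0) ∨ (a = 0 ∧ b = 3) := by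
    intro a b
    fin_cases a <;> fin_cases b <;>
      simp [C4, SimpleGraph.fromEdgeSet_adj, Sym2.eq, Sym2.rel_iff', Prod.ext_iff] <;> decide
  have n1 : ¬ H.Adj (Sum.inl u) (Sum.inr (0, true)) := by
    rw [hH, SimpleGraph.sup_adj]
    rintro (h | h)
    · simp [addPaths, SimpleGraph.fromRel_adj, hne] at h
    · exact no_mixed F _ _ ((SimpleGraph.fromEdgeSet_adj _).mp h).1
  have n2 : ¬ H.Adj (Sum.inl v) (Sum.inr (0, false)) := by
    rw [hH, SimpleGraph.sup_adj]
    rintro (h | h)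
    · simp [addPaths, SimpleGraph.fromRel_adj, hvu] at h
    · exact no_mixed F _ _ ((SimpleGraph.fromEdgeSet_adj _).mp h).1
  have h1 : H.Adj (Sum.inl u) (Sum.inr (0, false)) := by
    rw [hH, SimpleGraph.sup_adj]; left
    simp [addPaths, SimpleGraph.fromRel_adj]
  have h2 : H.Adj (Sum.inr (0, false) : V ⊕ (Fin (N + 1) × Bool)) (Sum.inr (0, true)) := by
    rw [hH, SimpleGraph.sup_adj]; left
    simp [addPaths, SimpleGraph.fromRel_adj]
  have h3 : H.Adj (Sum.inr (0, true)) (Sum.inl v) := by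
    rw [hH, SimpleGraph.sup_adj]; left
    simp [addPaths, SimpleGraph.fromRel_adj]
  have h4 : H.Adj (Sum.inl v) (Sum.inl u) := by
    rw [hH, SimpleGraph.sup_adj]; right
    rw [SimpleGraph.fromEdgeSet_adj]
    exact ⟨⟨s(u,v), hmem, by rw [Sym2.map_pair_eq, Sym2.eq_swap]⟩, by simp [hvu]⟩
  refine hfree.elim ⟨⟨f, hinj⟩, ?_⟩
  intro a b
  rw [hC4]
  constructor
  · intro hadj
    fin_cases a <;> fin_cases b <;> simp only [f, Matrix.cons_val_zero, Matrix.cons_val_one,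
        Matrix.head_cons, Matrix.cons_val_two, Matrix.tail_cons, Matrix.cons_val_three,
        Matrix.cons_val_fin_one, Matrix.head_fin_const] at hadj <;>
      first
      | decide
      | exact absurd hadj H.irrefl
      | exact absurd hadj n1
      | exact absurd hadj.symm n1
      | exact absurd hadj n2
      | exact absurd hadj.symm n2
  · intro hc
    fin_cases a <;> fin_cases b <;> simp only [f, Matrix.cons_val_zero, Matrix.cons_val_one,
        Matrix.head_cons, Matrix.cons_val_two, Matrix.tail_cons, Matrix.cons_val_three,
        Matrix.cons_val_fin_one, Matrix.head_fin_const] <;>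
      first
      | (exfalso; revert hc; decide)
      | exact h1 | exact h1.symm | exact h2 | exact h2.symm
      | exact h3 | exact h3.symm | exact h4 | exact h4.symm
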